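/- Let B : ℕ × ℕ → ℝ be defined by B(n, 0) = 0 for all n, B(0, i) = 0 for all i, and B(n, i) = ∑_{j=1}^{n} (binom(n, j)/2ⁿ) · (1 + B(j, i−1)) for n ≥ 1 and i ≥ 1. Then B(n, i) ≤ log₂(n) + 1 for all n ≥ 1 and all i ∈ ℕ. -/

import Mathlib

open Finset

-- sum of choose over Icc 1 n
lemma aux_sum_choose (n : ℕ) : ∑ j ∈ Icc 1 n, n.choose j = 2 ^ n - 1 := by
  have h : ∑ j ∈ range (n+1), n.choose j = 2 ^ n := Nat.sum_range_choose n
  have h2 : range (n+1) = insert 0 (Icc 1 n) := by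
    ext x; simp [Finset.mem_range, Finset.mem_Icc, Nat.lt_succ_iff]; omega
  rw [h2, Finset.sum_insert (by simp)] at h
  simp at h; omega

lemma aux_sum_mul_choose (n : ℕ) (hn : 1 ≤ n) :
    ∑ j ∈ Icc 1 n, j * n.choose j = n * 2 ^ (n - 1) := by
  obtain ⟨m, rfl⟩ : ∃ m, n = m + 1 := ⟨n - 1, by omega⟩
  rw [show Icc 1 (m+1) = Ico 1 (m+2) by rfl, Finset.sum_Ico_eq_sum_range]
  simp only [Nat.add_sub_cancel, show m + 2 - 1 = m + 1 by omega]
  have : ∀ k ∈ range (m+1), (1 + k) * (m+1).choose (1+k) = (m+1) * m.choose k := by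
    intro k _
    rw [add_comm 1 k, mul_comm]
    exact ((Nat.add_one_mul_choose_eq m k).symm)
  rw [Finset.sum_congr rfl this, ← Finset.mul_sum, Nat.sum_range_choose]


-- tangent line bound
lemma aux_log_bound (n j : ℕ) (hn : 1 ≤ n) (hj1 : 1 ≤ j) :
    Real.logb 2 j ≤ Real.logb 2 n - 1 + (2 * j / n - 1) / Real.log 2 := by
  have hnp : (0:ℝ) < n := by exact_mod_cast hn
  have hjp : (0:ℝ) < j := by exact_mod_cast hj1
  have hl2 : (0:ℝ) < Real.log 2 := Real.log_pos one_lt_two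
  have h1 : Real.log (2 * j / n) ≤ 2 * j / n - 1 := Real.log_le_sub_one_of_pos (by positivity)
  have h2 : Real.log (2 * (j:ℝ) / n) = Real.log 2 + Real.log j - Real.log n := by
    rw [Real.log_div (by positivity) (by positivity), Real.log_mul (by norm_num) (by positivity)]
  rw [h2] at h1
  have h3 : Real.log j ≤ Real.log n - Real.log 2 + (2 * j / n - 1) := by linarith
  calc Real.logb 2 (j:ℝ) = Real.log j / Real.log 2 := rfl
    _ ≤ (Real.log n - Real.log 2 + (2 * j / n - 1)) / Real.log 2 := by gcongr
    _ = Real.logb 2 n - 1 + (2 * j / n - 1) / Real.log 2 := by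
        rw [Real.logb]; field_simp

theorem maxBinom_le_log2 (B : ℕ → ℕ → ℝ)
    (h0 : ∀ n, B n 0 = 0) (h0' : ∀ i, B 0 i = 0)
    (hrec : ∀ n i, 1 ≤ n → 1 ≤ i →
      B n i = ∑ j ∈ Finset.Icc 1 n, ((n.choose j : ℝ) / 2 ^ n) * (1 + B j (i - 1))) :
    ∀ n i, 1 ≤ n → B n i ≤ Real.logb 2 n + 1 := by
  intro n i
  induction i generalizing n with
  | zero =>
    intro hn
    rw [h0]
    have : (0:ℝ) ≤ Real.logb 2 n := Real.logb_nonneg one_lt_two (by exact_mod_cast hn)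
    linarith
  | succ i ih =>
    intro hn
    rw [hrec n (i+1) hn (by omega)]
    simp only [Nat.add_sub_cancel]
    rcases eq_or_lt_of_le hn with h1 | h2
    · -- n = 1
      subst h1
      simp only [Finset.Icc_self, Finset.sum_singleton, Nat.choose_self, Nat.cast_one,
        pow_one, Nat.cast_one]
      have := ih 1 le_rfl
      simp only [Nat.cast_one, Real.logb_one] at this ⊢
      linarith
    · -- n ≥ 2
      have hn2 : 2 ≤ n := h2
      have hnp : (0:ℝ) < n := by exact_mod_cast hn
      have hl2 : (0:ℝ) < Real.log 2 := Real.log_pos one_lt_two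
      have hEpos : (0:ℝ) < 2 ^ n := by positivity
      set L := Real.logb 2 n with hLdef
      have hL1 : (1:ℝ) ≤ L := by
        rw [hLdef, show (1:ℝ) = Real.logb 2 2 by simp]
        exact Real.logb_le_logb_of_le one_lt_two (by norm_num) (by exact_mod_cast hn2)
      have hterm : ∀ j ∈ Finset.Icc 1 n, ((n.choose j : ℝ) / 2 ^ n) * (1 + B j i) ≤
          ((n.choose j : ℝ) / 2 ^ n) * ((1 + L) + (2 * j / n - 1) / Real.log 2) := by
        intro j hj
        rw [Finset.mem_Icc] at hj
        apply mul_le_mul_of_nonneg_left _ (by positivity)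
        have hih := ih j hj.1
        have hlog := aux_log_bound n j hn hj.1
        rw [← hLdef] at hlog
        linarith
      refine le_trans (Finset.sum_le_sum hterm) ?_
      have hexp : ∀ j ∈ Finset.Icc 1 n, ((n.choose j : ℝ) / 2 ^ n) *
          ((1 + L) + (2 * j / n - 1) / Real.log 2)
          = (n.choose j : ℝ) * (1 + L) / 2 ^ n
            + ((2 / n) * ((j:ℝ) * (n.choose j)) - (n.choose j)) / (2 ^ n * Real.log 2) := by
        intro j _
        field_simp
      rw [Finset.sum_congr rfl hexp, Finset.sum_add_distrib, ← Finset.sum_div, ← Finset.sum_div,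
        Finset.sum_sub_distrib, ← Finset.mul_sum, ← Finset.sum_mul]
      have hS0 : ∑ j ∈ Finset.Icc 1 n, ((n.choose j : ℝ)) = 2 ^ n - 1 := by
        have h := congrArg (Nat.cast (R := ℝ)) (aux_sum_choose n)
        push_cast [Nat.cast_sub (Nat.one_le_two_pow)] at h
        exact h
      have hS1 : ∑ j ∈ Finset.Icc 1 n, ((j:ℝ) * (n.choose j)) = n * 2 ^ (n - 1) := by
        have h := congrArg (Nat.cast (R := ℝ)) (aux_sum_mul_choose n hn)
        push_cast at h
        exact h
      rw [hS0, hS1]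
      have hsimp : (2 / (n:ℝ)) * ((n:ℝ) * 2 ^ (n - 1)) = 2 ^ n := by
        have hp : (2:ℝ) ^ n = 2 * 2 ^ (n - 1) := by
          rw [← pow_succ', show n - 1 + 1 = n by omega]
        field_simp [hp]
        rw [hp]
      rw [hsimp, show (2:ℝ) ^ n - ((2:ℝ) ^ n - 1) = 1 by ring]
      have key : (1:ℝ) ≤ (1 + L) * Real.log 2 := by
        have hld9 : (0.6931471803:ℝ) < Real.log 2 := Real.log_two_gt_d9
        nlinarith
      rw [div_add_div _ _ (ne_of_gt hEpos) (by positivity), div_le_iff₀ (by positivity)]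
      nlinarith [mul_nonneg hEpos.le (sub_nonneg.mpr key), mul_pos hEpos hl2,
        mul_pos hEpos hEpos]
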